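/- arXiv:2105.12721 — 6 statements merged into one kernel-verified Lean document; each statement's English description precedes it below -/
import Mathlib

section
/- There is no three-qubit pure state whose symmetry group (the set of qubit permutations leaving the state invariant) is exactly the alternating group A_3; any state invariant under all cyclic permutations of three qubits is invariant under the full symmetric group S_3. -/
/-- The space of pure (unnormalized) states of `N` qubits, written in the
computational basis: a complex amplitude for each bit string. -/
abbrev QState (N : ℕ) := (Fin N → Fin 2) → ℂ

/-- The action of a permutation of the subsystems on an `N`-qubit state
(permutation of the tensor factors). -/
def permAct {N : ℕ} (σ : Equiv.Perm (Fin N)) (ψ : QState N) : QState N :=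
  fun x => ψ (x ∘ σ)

lemma key (ψ : QState 3)
    (h : ∀ σ ∈ alternatingGroup (Fin 3), permAct σ ψ = ψ)
    (σ : Equiv.Perm (Fin 3)) : permAct σ ψ = ψ := by
  funext x
  obtain ⟨i, j, hij, hxij⟩ := Fintype.exists_ne_map_eq_of_card_lt x (by norm_num)
  have hswap : x ∘ (Equiv.swap i j) = x := by
    funext k
    simp only [Function.comp_apply]
    rcases eq_or_ne k i with rfl | hki
    · rw [Equiv.swap_apply_left, hxij]
    rcases eq_or_ne k j with rfl | hkj
    · rw [Equiv.swap_apply_right, hxij]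
    · rw [Equiv.swap_apply_of_ne_of_ne hki hkj]
  by_cases hs : σ ∈ alternatingGroup (Fin 3)
  · exact congrFun (h σ hs) x
  · have hs' : Equiv.swap i j * σ ∈ alternatingGroup (Fin 3) := by
      rw [Equiv.Perm.mem_alternatingGroup] at hs ⊢
      have : Equiv.Perm.sign σ = -1 := by
        rcases Int.units_eq_one_or (Equiv.Perm.sign σ) with h1 | h1
        · exact absurd h1 hs
        · exact h1
      rw [map_mul, Equiv.Perm.sign_swap hij, this]
      decide
    have := congrFun (h _ hs') x
    simp only [permAct] at this ⊢
    rw [← this]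
    congr 1
    funext k
    simp only [Function.comp_apply, Equiv.Perm.mul_apply]
    exact (congrFun hswap (σ k)).symm

/-- There is no three-qubit state whose symmetry group is exactly the
alternating group `A₃`: any state invariant under all cyclic (even)
permutations of three qubits is invariant under the full symmetric group. -/
theorem stmt0 :
    (¬ ∃ ψ : QState 3,
        {σ : Equiv.Perm (Fin 3) | permAct σ ψ = ψ}
          = (alternatingGroup (Fin 3) : Set (Equiv.Perm (Fin 3)))) ∧
    (∀ ψ : QState 3,
        (∀ σ ∈ alternatingGroup (Fin 3), permAct σ ψ = ψ) →
        ∀ σ : Equiv.Perm (Fin 3), permAct σ ψ = ψ) := by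
  refine ⟨?_, key⟩
  rintro ⟨ψ, hψ⟩
  have hA : ∀ σ ∈ alternatingGroup (Fin 3), permAct σ ψ = ψ := by
    intro σ hσ
    have : σ ∈ {σ : Equiv.Perm (Fin 3) | permAct σ ψ = ψ} := hψ ▸ hσ
    exact this
  have hτ : Equiv.swap (0 : Fin 3) 1 ∈ {σ : Equiv.Perm (Fin 3) | permAct σ ψ = ψ} :=
    key ψ hA _
  rw [hψ] at hτ
  have : Equiv.Perm.sign (Equiv.swap (0 : Fin 3) 1) = 1 :=
    Equiv.Perm.mem_alternatingGroup.mp hτ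
  rw [Equiv.Perm.sign_swap (by decide)] at this
  exact absurd this (by decide)
end

section
/- There is no four-qubit pure state whose symmetry group is exactly the cyclic group C_4: any pure state in (C^2)^{⊗4} invariant under the cyclic permutation (1 2 3 4) is also invariant under the dihedral group D_8. -/
/-- The cyclic group `C₄ ≤ S₄`, generated by the 4-cycle `(0 1 2 3)`. -/
def C4 : Subgroup (Equiv.Perm (Fin 4)) := Subgroup.closure {finRotate 4}

/-- The dihedral group `D₈ ≤ S₄` of symmetries of the square with vertices
`0,1,2,3` in cyclic order: generated by the rotation `(0 1 2 3)` and the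
reflection `(1 3)` across a diagonal. -/
def D8 : Subgroup (Equiv.Perm (Fin 4)) :=
  Subgroup.closure {finRotate 4, Equiv.swap (1 : Fin 4) 3}

/-- Every binary string of length 4: its reflection is one of its rotations. -/
lemma orbit_lemma : ∀ x : Fin 4 → Fin 2, ∃ k : Fin 4,
    x ∘ (Equiv.swap (1:Fin 4) 3) =
      x ∘ (((finRotate 4) ^ (k:ℕ) : Equiv.Perm (Fin 4)) : Fin 4 → Fin 4) := by
  decide

lemma pow_inv_aux (ψ : QState 4) (h : permAct (finRotate 4) ψ = ψ) (k : ℕ) :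
    permAct ((finRotate 4) ^ k) ψ = ψ := by
  induction k with
  | zero => funext x; simp [permAct]
  | succ n ih =>
    funext x
    have : (x ∘ ((finRotate 4) ^ (n+1) : Equiv.Perm (Fin 4)))
        = ((x ∘ ((finRotate 4) ^ n : Equiv.Perm (Fin 4))) ∘ (finRotate 4)) := by
      funext i; simp [pow_succ, Equiv.Perm.mul_apply, Function.comp]
    calc permAct ((finRotate 4) ^ (n+1)) ψ x
        = ψ (x ∘ ((finRotate 4) ^ (n+1) : Equiv.Perm (Fin 4))) := rfl
      _ = ψ ((x ∘ ((finRotate 4) ^ n : Equiv.Perm (Fin 4))) ∘ (finRotate 4)) := by rw [this]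
      _ = permAct (finRotate 4) ψ (x ∘ ((finRotate 4) ^ n : Equiv.Perm (Fin 4))) := rfl
      _ = ψ (x ∘ ((finRotate 4) ^ n : Equiv.Perm (Fin 4))) := by rw [h]
      _ = permAct ((finRotate 4) ^ n) ψ x := rfl
      _ = ψ x := by rw [ih]

lemma swap_inv (ψ : QState 4) (h : permAct (finRotate 4) ψ = ψ) :
    permAct (Equiv.swap (1:Fin 4) 3) ψ = ψ := by
  funext x
  obtain ⟨k, hk⟩ := orbit_lemma x
  calc permAct (Equiv.swap (1:Fin 4) 3) ψ x
      = ψ (x ∘ (Equiv.swap (1:Fin 4) 3)) := rfl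
    _ = ψ (x ∘ (((finRotate 4) ^ (k:ℕ) : Equiv.Perm (Fin 4)) : Fin 4 → Fin 4)) := by rw [hk]
    _ = permAct ((finRotate 4) ^ (k:ℕ)) ψ x := rfl
    _ = ψ x := by rw [pow_inv_aux ψ h]

lemma D8_inv (ψ : QState 4) (h : permAct (finRotate 4) ψ = ψ) :
    ∀ σ ∈ D8, permAct σ ψ = ψ := by
  intro σ hσ
  induction hσ using Subgroup.closure_induction with
  | mem g hg =>
    rcases hg with hg | hg
    · rw [hg]; exact h
    · rw [hg]; exact swap_inv ψ h
  | one => funext x; simp [permAct]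
  | mul a b _ _ ha hb =>
    funext x
    have : (x ∘ (a * b : Equiv.Perm (Fin 4))) = ((x ∘ a) ∘ b) := rfl
    calc permAct (a * b) ψ x = ψ ((x ∘ a) ∘ b) := by rw [permAct, this]
      _ = permAct b ψ (x ∘ a) := rfl
      _ = ψ (x ∘ a) := by rw [hb]
      _ = permAct a ψ x := rfl
      _ = ψ x := by rw [ha]
  | inv a _ ha =>
    funext x
    calc permAct a⁻¹ ψ x = ψ (x ∘ (a⁻¹ : Equiv.Perm (Fin 4))) := rfl
      _ = permAct a ψ (x ∘ (a⁻¹ : Equiv.Perm (Fin 4))) := by rw [ha]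
      _ = ψ ((x ∘ (a⁻¹ : Equiv.Perm (Fin 4))) ∘ a) := rfl
      _ = ψ x := by
          congr 1; funext i; simp [Function.comp]
    
lemma swap_notMem_C4 : Equiv.swap (1:Fin 4) 3 ∉ C4 := by
  intro hs
  obtain ⟨n, hn⟩ := Subgroup.mem_closure_singleton.mp hs
  have h4 : (finRotate 4) ^ (4:ℕ) = 1 := by decide
  have key : (finRotate 4) ^ ((n % 4).toNat) = Equiv.swap (1:Fin 4) 3 := by
    have h0 : 0 ≤ n % 4 := Int.emod_nonneg n (by norm_num)
    have : ((finRotate 4) ^ (n % 4) : Equiv.Perm (Fin 4)) = Equiv.swap (1:Fin 4) 3 := by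
      rw [← hn]
      conv_rhs => rw [show n = 4 * (n / 4) + n % 4 from (Int.mul_ediv_add_emod n 4).symm]
      rw [zpow_add, zpow_mul, show ((4:ℤ) = ((4:ℕ):ℤ)) by norm_num, zpow_natCast, h4,
        one_zpow, one_mul]
    rw [← this, ← zpow_natCast, Int.toNat_of_nonneg h0]
  have hlt : (n % 4).toNat < 4 := by omega
  interval_cases h : (n % 4).toNat <;> revert key <;> decide

/-- There is no four-qubit state whose symmetry group is exactly the cyclic
group `C₄`: any state of four qubits invariant under the cyclic permutation
`(0 1 2 3)` is invariant under the whole dihedral group `D₈`. -/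
theorem stmt4 :
    (¬ ∃ ψ : QState 4,
        {σ : Equiv.Perm (Fin 4) | permAct σ ψ = ψ} = (C4 : Set (Equiv.Perm (Fin 4)))) ∧
    (∀ ψ : QState 4, permAct (finRotate 4) ψ = ψ → ∀ σ ∈ D8, permAct σ ψ = ψ) := by
  constructor
  · rintro ⟨ψ, hset⟩
    have hr : permAct (finRotate 4) ψ = ψ := by
      have : finRotate 4 ∈ (C4 : Set (Equiv.Perm (Fin 4))) :=
        Subgroup.subset_closure rfl
      rw [← hset] at this
      exact this
    have hs : Equiv.swap (1:Fin 4) 3 ∈ {σ : Equiv.Perm (Fin 4) | permAct σ ψ = ψ} :=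
      swap_inv ψ hr
    rw [hset] at hs
    exact swap_notMem_C4 hs
  · exact D8_inv
end

section
/- For an excitation-state |G⟩ associated to a hypergraph G, the group of permutations of the qubits that leave |G⟩ invariant is exactly the automorphism group of the hypergraph G. -/
open scoped BigOperators

/-- The bit string with `1`s exactly at the positions of `e`. -/
def indicatorBits {N : ℕ} (e : Finset (Fin N)) : Fin N → Fin 2 :=
  fun i => if i ∈ e then 1 else 0

/-- The excitation-state `|G⟩ = (1/√|E|) Σ_{e ∈ E} |ψ_e⟩` of a hypergraph with
edge set `E`, where `|ψ_e⟩` has `|1⟩` at positions in `e` and `|0⟩` elsewhere. -/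
noncomputable def excState {N : ℕ} (E : Finset (Finset (Fin N))) : QState N :=
  fun x => ((Real.sqrt E.card : ℂ))⁻¹ * ∑ e ∈ E, if x = indicatorBits e then 1 else 0

lemma indicatorBits_injective {N : ℕ} : Function.Injective (indicatorBits (N := N)) := by
  intro e e' h
  ext i
  have := congrFun h i
  simp only [indicatorBits] at this
  split_ifs at this with h1 h2 h2 <;> simp_all

lemma comp_perm_iff {N : ℕ} (σ : Equiv.Perm (Fin N)) (x y : Fin N → Fin 2) :
    x ∘ σ = y ∘ σ ↔ x = y := by
  constructor
  · intro h
    funext j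
    have := congrFun h (σ.symm j)
    simpa using this
  · rintro rfl; rfl

lemma comp_indicator {N : ℕ} (σ : Equiv.Perm (Fin N)) (e : Finset (Fin N)) :
    indicatorBits (e.image σ) ∘ σ = indicatorBits e := by
  funext i
  simp [indicatorBits, Finset.mem_image, σ.injective.eq_iff]

lemma excState_eval {N : ℕ} (S : Finset (Finset (Fin N))) (a : Finset (Fin N)) :
    excState S (indicatorBits a)
      = ((Real.sqrt S.card : ℂ))⁻¹ * (if a ∈ S then 1 else 0) := by
  unfold excState
  congr 1
  have : ∀ e ∈ S, (if indicatorBits a = indicatorBits e then (1:ℂ) else 0)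
      = if a = e then 1 else 0 := by
    intro e _
    simp [indicatorBits_injective.eq_iff]
  rw [Finset.sum_congr rfl this]
  simp

/-- The group of qubit permutations leaving the excitation-state `|G⟩` of a
hypergraph invariant is exactly the automorphism group of the hypergraph. -/
theorem stmt5 {N : ℕ} (E : Finset (Finset (Fin N))) (hE : E.Nonempty)
    (σ : Equiv.Perm (Fin N)) :
    permAct σ (excState E) = excState E ↔
      ∀ e : Finset (Fin N), e ∈ E ↔ e.image σ ∈ E := by
  set f : Finset (Fin N) → Finset (Fin N) := fun e => e.image σ with hf
  have hfinj : Function.Injective f := Finset.image_injective σ.injective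
  have hcard : (E.image f).card = E.card := Finset.card_image_of_injective E hfinj
  have hperm : permAct σ (excState E) = excState (E.image f) := by
    funext x
    unfold permAct excState
    rw [hcard]
    congr 1
    rw [Finset.sum_image (fun a _ b _ h => hfinj h)]
    refine Finset.sum_congr rfl fun e _ => ?_
    have : x ∘ σ = indicatorBits e ↔ x = indicatorBits (f e) := by
      rw [← comp_indicator σ e, comp_perm_iff]
    simp [this]
  have hc : ((Real.sqrt E.card : ℂ))⁻¹ ≠ 0 := by
    have h1 : (0:ℝ) < Real.sqrt E.card :=
      Real.sqrt_pos.mpr (by exact_mod_cast Finset.card_pos.mpr hE)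
    exact inv_ne_zero (by exact_mod_cast h1.ne')
  rw [hperm]
  constructor
  · intro h e
    have := congrFun h (indicatorBits (f e))
    rw [excState_eval, excState_eval, hcard] at this
    have h2 := mul_left_cancel₀ hc this
    have hmem : f e ∈ E.image f ↔ e ∈ E := by
      constructor
      · intro h3
        obtain ⟨a, ha, hae⟩ := Finset.mem_image.mp h3
        rwa [← hfinj hae]
      · exact fun h3 => Finset.mem_image_of_mem f h3
    have h3 : (if e ∈ E then (1:ℂ) else 0) = if f e ∈ E then 1 else 0 :=
      (if_congr hmem rfl rfl).symm.trans h2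
    constructor
    · intro he
      by_contra hne
      rw [if_pos he, if_neg hne] at h3
      exact one_ne_zero h3
    · intro he
      by_contra hne
      rw [if_neg hne, if_pos he] at h3
      exact one_ne_zero h3.symm
  · intro H
    have : E.image f = E := by
      apply Finset.eq_of_subset_of_card_le
      · intro a ha
        obtain ⟨e, he, rfl⟩ := Finset.mem_image.mp ha
        exact (H e).mp he
      · rw [hcard]
    rw [this]
end

section
/- The excitation-state |G⟩ of a k-uniform hypergraph G on vertex set V = V_1 ∪ V_2 factorizes as |G⟩ = |G_1⟩_{V_1} ⊗ |G_2⟩_{V_2} if and only if G is a product hypergraph with respect to the partition V_1 | V_2, i.e., there exist edge sets E_1 ⊆ P(V_1), E_2 ⊆ P(V_2) with E = {e_1 ∪ e_2 : e_1 ∈ E_1, e_2 ∈ E_2}. -/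
open scoped BigOperators

/-- `|G⟩` factorizes across the bipartition `S | Sᶜ` of the qubits, i.e. it is
a tensor product of a state on the qubits in `S` and a state on the qubits
outside `S` (expressed by amplitudes that depend only on the respective
coordinates). -/
def FactorizesAcross {N : ℕ} (ψ : QState N) (S : Finset (Fin N)) : Prop :=
  ∃ φ₁ φ₂ : QState N,
    (∀ x y : Fin N → Fin 2, (∀ i ∈ S, x i = y i) → φ₁ x = φ₁ y) ∧
    (∀ x y : Fin N → Fin 2, (∀ i ∉ S, x i = y i) → φ₂ x = φ₂ y) ∧
    (∀ x, ψ x = φ₁ x * φ₂ x)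

def suppOf {N : ℕ} (x : Fin N → Fin 2) : Finset (Fin N) :=
  Finset.univ.filter (fun i => x i = 1)

lemma eq_indicator_iff {N : ℕ} (x : Fin N → Fin 2) (e : Finset (Fin N)) :
    x = indicatorBits e ↔ suppOf x = e := by
  have h2 : ∀ b : Fin 2, b = 0 ∨ b = 1 := by decide
  constructor
  · rintro rfl
    ext i
    simp only [suppOf, Finset.mem_filter, Finset.mem_univ, true_and, indicatorBits]
    by_cases h : i ∈ e <;> simp_all
  · rintro rfl
    funext i
    simp only [indicatorBits, suppOf, Finset.mem_filter, Finset.mem_univ, true_and]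
    rcases h2 (x i) with h | h <;> simp [h]

lemma inter_union_sdiff' {N : ℕ} (g S : Finset (Fin N)) : g ∩ S ∪ g \ S = g := by
  ext i; simp only [Finset.mem_union, Finset.mem_inter, Finset.mem_sdiff]; tauto

lemma suppOf_indicator {N : ℕ} (e : Finset (Fin N)) : suppOf (indicatorBits e) = e :=
  (eq_indicator_iff _ _).mp rfl

lemma excState_eq {N : ℕ} (E : Finset (Finset (Fin N))) (x : Fin N → Fin 2) :
    excState E x = ((Real.sqrt E.card : ℂ))⁻¹ * (if suppOf x ∈ E then 1 else 0) := by
  unfold excState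
  congr 1
  simp only [eq_indicator_iff]
  simp

lemma coef_ne {N : ℕ} {E : Finset (Finset (Fin N))} (hE : E.Nonempty) :
    ((Real.sqrt E.card : ℂ))⁻¹ ≠ 0 := by
  have : (0:ℝ) < Real.sqrt E.card := Real.sqrt_pos.mpr (by
    exact_mod_cast Finset.card_pos.mpr hE)
  simp [Complex.ofReal_ne_zero, ne_of_gt this]

lemma mem_iff_ne {N : ℕ} {E : Finset (Finset (Fin N))} (hE : E.Nonempty)
    (g : Finset (Fin N)) : g ∈ E ↔ excState E (indicatorBits g) ≠ 0 := by
  rw [excState_eq, suppOf_indicator]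
  have := coef_ne hE
  split <;> simp_all

/-- The excitation-state of a `k`-uniform hypergraph factorizes across the
bipartition `S | Sᶜ` of the vertices iff the hypergraph is a product
hypergraph with respect to this partition: there are edge sets `E₁` on `S` and
`E₂` on `Sᶜ` with `E = {e₁ ∪ e₂ : e₁ ∈ E₁, e₂ ∈ E₂}`. -/
theorem stmt6 {N k : ℕ} (E : Finset (Finset (Fin N))) (hE : E.Nonempty)
    (hk : ∀ e ∈ E, e.card = k) (S : Finset (Fin N)) :
    FactorizesAcross (excState E) S ↔
      ∃ E₁ E₂ : Finset (Finset (Fin N)),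
        (∀ e ∈ E₁, e ⊆ S) ∧ (∀ e ∈ E₂, ∀ i ∈ e, i ∉ S) ∧
        E = (E₁ ×ˢ E₂).image (fun p => p.1 ∪ p.2) := by
  constructor
  · rintro ⟨φ₁, φ₂, h₁, h₂, hψ⟩
    refine ⟨E.image (· ∩ S), E.image (· \ S), ?_, ?_, ?_⟩
    · rintro e he
      obtain ⟨f, -, rfl⟩ := Finset.mem_image.mp he
      exact Finset.inter_subset_right
    · rintro e he i hi
      obtain ⟨f, -, rfl⟩ := Finset.mem_image.mp he
      exact (Finset.mem_sdiff.mp hi).2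
    · ext g
      simp only [Finset.mem_image, Finset.mem_product, Prod.exists]
      constructor
      · intro hg
        exact ⟨g ∩ S, g \ S, ⟨⟨g, hg, rfl⟩, ⟨g, hg, rfl⟩⟩, inter_union_sdiff' g S⟩
      · rintro ⟨a, b, ⟨⟨e, he, rfl⟩, ⟨f, hf, rfl⟩⟩, rfl⟩
        -- show (e ∩ S) ∪ (f \ S) ∈ E
        rw [mem_iff_ne hE, hψ]
        have hφ₁ : φ₁ (indicatorBits (e ∩ S ∪ f \ S)) = φ₁ (indicatorBits e) := by
          apply h₁
          intro i hi
          simp only [indicatorBits, Finset.mem_union, Finset.mem_inter, Finset.mem_sdiff]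
          by_cases h : i ∈ e <;> simp [h, hi]
        have hφ₂ : φ₂ (indicatorBits (e ∩ S ∪ f \ S)) = φ₂ (indicatorBits f) := by
          apply h₂
          intro i hi
          simp only [indicatorBits, Finset.mem_union, Finset.mem_inter, Finset.mem_sdiff]
          by_cases h : i ∈ f <;> simp [h, hi]
        rw [hφ₁, hφ₂]
        have he' := (mem_iff_ne hE e).mp he
        have hf' := (mem_iff_ne hE f).mp hf
        rw [hψ] at he' hf'
        exact mul_ne_zero (left_ne_zero_of_mul he') (right_ne_zero_of_mul hf')
  · rintro ⟨E₁, E₂, hE₁, hE₂, rfl⟩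
    set E := (E₁ ×ˢ E₂).image (fun p : Finset (Fin N) × Finset (Fin N) => p.1 ∪ p.2) with hEdef
    refine ⟨fun x => ((Real.sqrt E.card : ℂ))⁻¹ *
        (if Finset.univ.filter (fun i => i ∈ S ∧ x i = 1) ∈ E₁ then 1 else 0),
      fun x => (if Finset.univ.filter (fun i => i ∉ S ∧ x i = 1) ∈ E₂ then 1 else 0),
      ?_, ?_, ?_⟩
    · intro x y h
      have hfe : Finset.univ.filter (fun i => i ∈ S ∧ x i = 1)
          = Finset.univ.filter (fun i => i ∈ S ∧ y i = 1) := by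
        ext i
        simp only [Finset.mem_filter, Finset.mem_univ, true_and]
        constructor
        · rintro ⟨hi, hx⟩; exact ⟨hi, (h i hi) ▸ hx⟩
        · rintro ⟨hi, hx⟩; exact ⟨hi, (h i hi).symm ▸ hx⟩
      simp only [hfe]
    · intro x y h
      have hfe : Finset.univ.filter (fun i => i ∉ S ∧ x i = 1)
          = Finset.univ.filter (fun i => i ∉ S ∧ y i = 1) := by
        ext i
        simp only [Finset.mem_filter, Finset.mem_univ, true_and]
        constructor
        · rintro ⟨hi, hx⟩; exact ⟨hi, (h i hi) ▸ hx⟩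
        · rintro ⟨hi, hx⟩; exact ⟨hi, (h i hi).symm ▸ hx⟩
      simp only [hfe]
    · intro x
      rw [excState_eq]
      have hmem : suppOf x ∈ E ↔
          (Finset.univ.filter (fun i => i ∈ S ∧ x i = 1) ∈ E₁ ∧
           Finset.univ.filter (fun i => i ∉ S ∧ x i = 1) ∈ E₂) := by
        have hA : Finset.univ.filter (fun i => i ∈ S ∧ x i = 1) = suppOf x ∩ S := by
          ext i; simp [suppOf, and_comm]
        have hB : Finset.univ.filter (fun i => i ∉ S ∧ x i = 1) = suppOf x \ S := by
          ext i; simp [suppOf, and_comm]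
        rw [hA, hB, hEdef]
        simp only [Finset.mem_image, Finset.mem_product, Prod.exists]
        constructor
        · rintro ⟨a, b, ⟨ha, hb⟩, h⟩
          have h1 : (a ∪ b) ∩ S = a := by
            ext i
            simp only [Finset.mem_inter, Finset.mem_union]
            constructor
            · rintro ⟨hi | hi, hiS⟩
              · exact hi
              · exact absurd hiS (hE₂ b hb i hi)
            · intro hi; exact ⟨Or.inl hi, hE₁ a ha hi⟩
          have h2 : (a ∪ b) \ S = b := by
            ext i
            simp only [Finset.mem_sdiff, Finset.mem_union]
            constructor
            · rintro ⟨hi | hi, hiS⟩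
              · exact absurd (hE₁ a ha hi) hiS
              · exact hi
            · intro hi; exact ⟨Or.inr hi, hE₂ b hb i hi⟩
          rw [← h, h1, h2]
          exact ⟨ha, hb⟩
        · rintro ⟨ha, hb⟩
          exact ⟨_, _, ⟨ha, hb⟩, inter_union_sdiff' _ _⟩
      by_cases h1 : Finset.univ.filter (fun i => i ∈ S ∧ x i = 1) ∈ E₁ <;>
        by_cases h2 : Finset.univ.filter (fun i => i ∉ S ∧ x i = 1) ∈ E₂ <;>
        simp [h1, h2, hmem]
end

section
/- For the cyclic excitation-state |C_N⟩ (N ≥ 5), the two-party concurrence between vertices v and w equals 2/N if their distance in the cycle graph is 2, and equals 0 otherwise; for N = 4, the concurrence between opposite vertices equals 1. -/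
open scoped BigOperators

/-- The cycle graph on `ZMod N`: vertices `v` and `v+1` are adjacent. -/
def cycleGraph (N : ℕ) : SimpleGraph (ZMod N) :=
  SimpleGraph.fromRel (fun v w => w = v + 1)

noncomputable instance (N : ℕ) : DecidableRel (cycleGraph N).Adj :=
  Classical.decRel _

noncomputable instance (N : ℕ) [NeZero N] : DecidableEq (ZMod N) :=
  Classical.decEq _

/-- Joint neighborhood `n_{vw}`: number of common neighbors of `v` and `w`. -/
noncomputable def jointN {V : Type*} [Fintype V] (G : SimpleGraph V)
    [DecidableRel G.Adj] (v w : V) : ℕ :=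
  (Finset.univ.filter (fun u => G.Adj v u ∧ G.Adj u w)).card

/-- Section `s_{vw}`: for a graph, `1` if `v` and `w` are adjacent, else `0`. -/
noncomputable def secN {V : Type*} (G : SimpleGraph V) [DecidableRel G.Adj]
    (v w : V) : ℕ :=
  if G.Adj v w then 1 else 0

/-- Two-party concurrence of the excitation-state of a graph, via the formula
`C_{vw} = max {0, (2/|E|)(n_{vw} − √(s_{vw}(|E| − d_v − d_w + s_{vw})))}`. -/
noncomputable def conc {V : Type*} [Fintype V] [DecidableEq V] (G : SimpleGraph V)
    [DecidableRel G.Adj] (v w : V) : ℝ :=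
  max 0 ((2 / (G.edgeFinset.card : ℝ)) *
    ((jointN G v w : ℝ) - Real.sqrt ((secN G v w : ℝ) *
      ((G.edgeFinset.card : ℝ) - (G.degree v : ℝ) - (G.degree w : ℝ) + (secN G v w : ℝ)))))

section Aux

variable {N : ℕ}

lemma cg_adj (N : ℕ) (v w : ZMod N) :
    (cycleGraph N).Adj v w ↔ v ≠ w ∧ (w = v + 1 ∨ v = w + 1) := by
  simp [cycleGraph, SimpleGraph.fromRel_adj]

lemma zmod_cast_ne_zero {k : ℕ} (h1 : 0 < k) (h2 : k < N) : ((k : ℕ) : ZMod N) ≠ 0 := by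
  intro h
  rw [ZMod.natCast_eq_zero_iff] at h
  exact absurd (Nat.le_of_dvd h1 h) (by omega)

lemma zmod1 (h : 3 ≤ N) : (1 : ZMod N) ≠ 0 := by
  simpa using zmod_cast_ne_zero (N := N) (k := 1) (by norm_num) (by omega)

lemma zmod2 (h : 3 ≤ N) : (2 : ZMod N) ≠ 0 := by
  simpa using zmod_cast_ne_zero (N := N) (k := 2) (by norm_num) (by omega)

lemma zmod3 (h : 4 ≤ N) : (3 : ZMod N) ≠ 0 := by
  simpa using zmod_cast_ne_zero (N := N) (k := 3) (by norm_num) (by omega)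

lemma zmod4 (h : 5 ≤ N) : (4 : ZMod N) ≠ 0 := by
  simpa using zmod_cast_ne_zero (N := N) (k := 4) (by norm_num) (by omega)

lemma cg_neighbor [NeZero N] (h : 3 ≤ N) (v : ZMod N) :
    (cycleGraph N).neighborFinset v = {v + 1, v - 1} := by
  have h1 := zmod1 h
  ext u
  simp only [SimpleGraph.mem_neighborFinset, cg_adj, Finset.mem_insert, Finset.mem_singleton]
  constructor
  · rintro ⟨-, h | h⟩
    · exact Or.inl h
    · right; rw [h]; ring
  · rintro (h | h)
    · subst h
      exact ⟨fun he => h1 (by linear_combination -he), Or.inl rfl⟩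
    · subst h
      exact ⟨fun he => h1 (by linear_combination he), Or.inr (by ring)⟩

lemma cg_degree [NeZero N] (h : 3 ≤ N) (v : ZMod N) : (cycleGraph N).degree v = 2 := by
  rw [← SimpleGraph.card_neighborFinset_eq_degree, cg_neighbor h]
  rw [Finset.card_insert_of_notMem, Finset.card_singleton]
  simp only [Finset.mem_singleton]
  intro he
  exact zmod2 h (by linear_combination he)

lemma cg_card_edges [NeZero N] (h : 3 ≤ N) : (cycleGraph N).edgeFinset.card = N := by
  have hs := SimpleGraph.sum_degrees_eq_twice_card_edges (cycleGraph N)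
  simp only [cg_degree h, Finset.sum_const, Finset.card_univ, ZMod.card, smul_eq_mul] at hs
  omega

lemma cg_not_adj_two (h : 5 ≤ N) (v w : ZMod N) (hw : w = v + 2 ∨ w = v - 2) :
    ¬ (cycleGraph N).Adj v w := by
  rw [cg_adj]
  rintro ⟨hne, hadj | hadj⟩ <;> rcases hw with rfl | rfl
  · exact zmod1 (N := N) (by omega) (by linear_combination hadj)
  · exact zmod3 (N := N) (by omega) (by linear_combination -hadj)
  · exact zmod3 (N := N) (by omega) (by linear_combination -hadj)
  · exact zmod1 (N := N) (by omega) (by linear_combination hadj)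

lemma cg_filter_eq [NeZero N] (h : 3 ≤ N) (v w : ZMod N) :
    (Finset.univ.filter (fun u => (cycleGraph N).Adj v u ∧ (cycleGraph N).Adj u w))
      = ({v + 1, v - 1} ∩ {w + 1, w - 1} : Finset (ZMod N)) := by
  ext u
  simp only [Finset.mem_filter, Finset.mem_univ, true_and, Finset.mem_inter]
  rw [show (cycleGraph N).Adj u w ↔ (cycleGraph N).Adj w u from (cycleGraph N).adj_comm u w,
    ← SimpleGraph.mem_neighborFinset, ← SimpleGraph.mem_neighborFinset,
    cg_neighbor h, cg_neighbor h]

lemma cg_jointN [NeZero N] (h : 5 ≤ N) (v w : ZMod N) (hvw : v ≠ w) :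
    jointN (cycleGraph N) v w = if w = v + 2 ∨ w = v - 2 then 1 else 0 := by
  have h2 := zmod2 (by omega : 3 ≤ N)
  have h4 := zmod4 h
  rw [jointN, cg_filter_eq (by omega)]
  split_ifs with hw
  · rcases hw with rfl | rfl
    · have : ({v + 1, v - 1} ∩ {v + 2 + 1, v + 2 - 1} : Finset (ZMod N)) = {v + 1} := by
        ext u
        simp only [Finset.mem_inter, Finset.mem_insert, Finset.mem_singleton]
        constructor
        · rintro ⟨ha | ha, hb | hb⟩
          · exact absurd (show (2 : ZMod N) = 0 by linear_combination ha - hb) h2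
          · exact ha
          · exact absurd (show (4 : ZMod N) = 0 by linear_combination ha - hb) h4
          · exact absurd (show (2 : ZMod N) = 0 by linear_combination ha - hb) h2
        · rintro rfl
          exact ⟨Or.inl rfl, Or.inr (by ring)⟩
      rw [this, Finset.card_singleton]
    · have : ({v + 1, v - 1} ∩ {v - 2 + 1, v - 2 - 1} : Finset (ZMod N)) = {v - 1} := by
        ext u
        simp only [Finset.mem_inter, Finset.mem_insert, Finset.mem_singleton]
        constructor
        · rintro ⟨ha | ha, hb | hb⟩
          · exact absurd (show (2 : ZMod N) = 0 by linear_combination hb - ha) h2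
          · exact absurd (show (4 : ZMod N) = 0 by linear_combination hb - ha) h4
          · exact ha
          · exact absurd (show (2 : ZMod N) = 0 by linear_combination hb - ha) h2
        · rintro rfl
          exact ⟨Or.inr rfl, Or.inl (by ring)⟩
      rw [this, Finset.card_singleton]
  · push_neg at hw
    obtain ⟨hw1, hw2⟩ := hw
    have : ({v + 1, v - 1} ∩ {w + 1, w - 1} : Finset (ZMod N)) = ∅ := by
      ext u
      simp only [Finset.mem_inter, Finset.mem_insert, Finset.mem_singleton,
        Finset.notMem_empty, iff_false, not_and]
      rintro (ha | ha) (hb | hb)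
      · exact absurd (show w = v by linear_combination ha - hb) (fun he => hvw he.symm)
      · exact absurd (show w = v + 2 by linear_combination ha - hb) hw1
      · exact absurd (show w = v - 2 by linear_combination ha - hb) hw2
      · exact absurd (show w = v by linear_combination ha - hb) (fun he => hvw he.symm)
    rw [this, Finset.card_empty]

lemma cg_dist_two [NeZero N] (h : 5 ≤ N) (v w : ZMod N) (hw : w = v + 2 ∨ w = v - 2) :
    (cycleGraph N).dist v w = 2 := by
  have hna := cg_not_adj_two h v w hw
  have hne : v ≠ w := by
    rintro rfl
    rcases hw with he | he
    · exact zmod2 (N := N) (by omega) (by linear_combination -he)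
    · exact zmod2 (N := N) (by omega) (by linear_combination he)
  have hp : ∃ p : (cycleGraph N).Walk v w, p.length = 2 := by
    rcases hw with rfl | rfl
    · have h1 : (cycleGraph N).Adj v (v + 1) := by
        rw [cg_adj]
        exact ⟨fun he => zmod1 (N := N) (by omega) (by linear_combination -he), Or.inl rfl⟩
      have h2 : (cycleGraph N).Adj (v + 1) (v + 2) := by
        rw [cg_adj]
        exact ⟨fun he => zmod1 (N := N) (by omega) (by linear_combination -he), Or.inl (by ring)⟩
      exact ⟨SimpleGraph.Walk.cons h1 (SimpleGraph.Walk.cons h2 SimpleGraph.Walk.nil), rfl⟩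
    · have h1 : (cycleGraph N).Adj v (v - 1) := by
        rw [cg_adj]
        exact ⟨fun he => zmod1 (N := N) (by omega) (by linear_combination he), Or.inr (by ring)⟩
      have h2 : (cycleGraph N).Adj (v - 1) (v - 2) := by
        rw [cg_adj]
        exact ⟨fun he => zmod1 (N := N) (by omega) (by linear_combination he), Or.inr (by ring)⟩
      exact ⟨SimpleGraph.Walk.cons h1 (SimpleGraph.Walk.cons h2 SimpleGraph.Walk.nil), rfl⟩
  obtain ⟨p, hpl⟩ := hp
  have hle : (cycleGraph N).dist v w ≤ 2 := hpl ▸ SimpleGraph.dist_le p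
  have hne0 : (cycleGraph N).dist v w ≠ 0 := by
    rw [SimpleGraph.dist_ne_zero_iff_ne_and_reachable]
    exact ⟨hne, p.reachable⟩
  have hne1 : (cycleGraph N).dist v w ≠ 1 := by
    rw [ne_eq, SimpleGraph.dist_eq_one_iff_adj]
    exact hna
  omega

lemma cg_dist_two_iff [NeZero N] (h : 5 ≤ N) (v w : ZMod N) :
    (cycleGraph N).dist v w = 2 ↔ (w = v + 2 ∨ w = v - 2) := by
  constructor
  · intro hd
    have hne : v ≠ w :=
      (SimpleGraph.dist_ne_zero_iff_ne_and_reachable.mp (by omega : (cycleGraph N).dist v w ≠ 0)).1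
    obtain ⟨p, hp⟩ := SimpleGraph.exists_walk_of_dist_ne_zero (by omega : (cycleGraph N).dist v w ≠ 0)
    rw [hd] at hp
    cases p with
    | nil => simp at hp
    | cons ha q =>
      cases q with
      | nil => simp at hp
      | cons hb r =>
        cases r with
        | nil =>
          rw [cg_adj] at ha hb
          obtain ⟨-, ha | ha⟩ := ha <;> obtain ⟨hneb, hb | hb⟩ := hb
          · left; rw [hb, ha]; ring
          · exact absurd (show v = w by linear_combination hb - ha) hne
          · exact absurd (show v = w by linear_combination ha - hb) hne
          · right; linear_combination -ha - hb
        | cons hc s => simp [SimpleGraph.Walk.length_cons] at hp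
  · exact cg_dist_two h v w

end Aux

/-- For the cyclic excitation-state `|C_N⟩` with `N ≥ 5`, the two-party
concurrence between distinct vertices equals `2/N` if their distance in the
cycle is `2`, and `0` otherwise; for `N = 4`, the concurrence between opposite
vertices equals `1`. -/
theorem stmt13 (N : ℕ) [NeZero N] :
    (5 ≤ N → ∀ v w : ZMod N, v ≠ w →
      conc (cycleGraph N) v w =
        if (cycleGraph N).dist v w = 2 then 2 / (N : ℝ) else 0) ∧
    (N = 4 → ∀ v : ZMod N, conc (cycleGraph N) v (v + 2) = 1) := by
  constructor
  · intro h5 v w hvw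
    have h3 : 3 ≤ N := by omega
    have hE := cg_card_edges h3
    have hNpos : (0 : ℝ) < N := by positivity
    by_cases hd : (cycleGraph N).dist v w = 2
    · rw [if_pos hd]
      have hw := (cg_dist_two_iff h5 v w).mp hd
      have hna := cg_not_adj_two h5 v w hw
      rw [conc, hE, secN, if_neg hna, cg_jointN h5 v w hvw, if_pos hw]
      push_cast
      rw [zero_mul, Real.sqrt_zero, sub_zero, mul_one]
      exact max_eq_right (by positivity)
    · rw [if_neg hd]
      have hjn : jointN (cycleGraph N) v w = 0 := by
        rw [cg_jointN h5 v w hvw, if_neg]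
        intro hw
        exact hd (cg_dist_two h5 v w hw)
      by_cases ha : (cycleGraph N).Adj v w
      · rw [conc, hE, secN, if_pos ha, hjn, cg_degree h3, cg_degree h3]
        push_cast
        rw [zero_sub]
        refine max_eq_left ?_
        apply mul_nonpos_of_nonneg_of_nonpos
        · positivity
        · simp [Real.sqrt_nonneg]
      · rw [conc, hE, secN, if_neg ha, hjn]
        push_cast
        rw [zero_mul, Real.sqrt_zero, sub_zero, mul_zero]
        simp
  · rintro rfl v
    have h3 : (3 : ℕ) ≤ 4 := by omega
    have hE := cg_card_edges (N := 4) h3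
    have h40 : (4 : ZMod 4) = 0 := by
      have := ZMod.natCast_self 4
      push_cast at this
      exact this
    have h24 : (2 : ZMod 4) ≠ 0 := zmod2 (by norm_num)
    have hna : ¬ (cycleGraph 4).Adj v (v + 2) := by
      rw [cg_adj]
      rintro ⟨-, ha | ha⟩
      · exact absurd (show (1 : ZMod 4) = 0 by linear_combination ha) (zmod1 (by norm_num))
      · exact absurd (show (3 : ZMod 4) = 0 by linear_combination -ha) (zmod3 (by norm_num))
    have hjn : jointN (cycleGraph 4) v (v + 2) = 2 := by
      rw [jointN, cg_filter_eq h3]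
      have : ({v + 1, v - 1} ∩ {v + 2 + 1, v + 2 - 1} : Finset (ZMod 4)) = {v + 1, v + 3} := by
        ext u
        simp only [Finset.mem_inter, Finset.mem_insert, Finset.mem_singleton]
        constructor
        · rintro ⟨ha | ha, -⟩
          · exact Or.inl ha
          · right; linear_combination ha - h40
        · rintro (rfl | rfl)
          · exact ⟨Or.inl rfl, Or.inr (by ring)⟩
          · refine ⟨Or.inr ?_, Or.inl (by ring)⟩
            linear_combination h40
      rw [this, Finset.card_insert_of_notMem, Finset.card_singleton]
      simp only [Finset.mem_singleton]
      intro he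
      exact absurd (show (2 : ZMod 4) = 0 by linear_combination -he) h24
    rw [conc, hE, secN, if_neg hna, hjn]
    push_cast
    rw [zero_mul, Real.sqrt_zero, sub_zero]
    norm_num
end

section
/- For the hypercube graph Q_m (m ≥ 2), the excitation-state |B^2_{2^m}⟩ has two-party concurrence C_{vw} = 2^{3−m}/m between vertices at Hamming distance 2 and zero otherwise, and entanglement ratio Γ_v = 4(m−1)/((2^m−2)m), which tends to 0 as m → ∞. -/
open scoped BigOperators
open Filter

/-- The hypercube graph `Q_m`: vertices are bit strings of length `m`, with
edges between vertices at Hamming distance `1`. -/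
def cubeGraph (m : ℕ) : SimpleGraph (Fin m → Fin 2) :=
  SimpleGraph.fromRel (fun x y => hammingDist x y = 1)

noncomputable instance (m : ℕ) : DecidableRel (cubeGraph m).Adj :=
  Classical.decRel _

/-- Entanglement ratio `Γ_v = (Σ_{w≠v} C_{vw}²) / C_{v|rest}²`, with
`C_{v|rest}² = 4 d_v(|E| − d_v)/|E|²`. -/
noncomputable def gammaV {V : Type*} [Fintype V] [DecidableEq V] (G : SimpleGraph V)
    [DecidableRel G.Adj] (v : V) : ℝ :=
  (∑ w ∈ Finset.univ.erase v, (conc G v w) ^ 2) /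
    (4 * (G.degree v : ℝ) * ((G.edgeFinset.card : ℝ) - (G.degree v : ℝ)) /
      (G.edgeFinset.card : ℝ) ^ 2)

section Aux
open Finset

variable {m : ℕ}

def flipAt (v : Fin m → Fin 2) (i : Fin m) : Fin m → Fin 2 :=
  Function.update v i (v i + 1)

lemma fin2_ne_iff (x y : Fin 2) : x ≠ y ↔ x = y + 1 := by revert x y; decide

lemma hD (v w : Fin m → Fin 2) :
    hammingDist v w = (univ.filter fun i => v i ≠ w i).card := rfl

lemma flipAt_apply_self (v : Fin m → Fin 2) (i : Fin m) : flipAt v i i = v i + 1 := by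
  simp [flipAt]

lemma flipAt_apply_ne (v : Fin m → Fin 2) {i j : Fin m} (h : j ≠ i) : flipAt v i j = v j := by
  simp [flipAt, Function.update_of_ne h]

lemma flipAt_injective (v : Fin m → Fin 2) : Function.Injective (flipAt v) := by
  intro i j h
  by_contra hij
  have h1 := congrFun h i
  rw [flipAt_apply_self, flipAt_apply_ne v hij] at h1
  have : v i ≠ v i := (fin2_ne_iff (v i) (v i)).mpr h1.symm
  exact this rfl

lemma dist_flipAt (v w : Fin m → Fin 2) (i : Fin m) :
    hammingDist (flipAt v i) w =
      if v i = w i then hammingDist v w + 1 else hammingDist v w - 1 := by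
  rw [hD, hD]
  by_cases h : v i = w i
  · rw [if_pos h]
    have he : (univ.filter fun j => flipAt v i j ≠ w j)
        = insert i (univ.filter fun j => v j ≠ w j) := by
      ext j
      by_cases hj : j = i
      · subst hj
        simp only [mem_filter, mem_univ, true_and, mem_insert, flipAt_apply_self]
        have : v j + 1 ≠ w j := by
          rw [← h]; generalize v j = x; revert x; decide
        tauto
      · simp [flipAt_apply_ne v hj, hj]
    rw [he, card_insert_of_notMem (by simp [h])]
  · rw [if_neg h]
    have he : (univ.filter fun j => flipAt v i j ≠ w j)
        = (univ.filter fun j => v j ≠ w j).erase i := by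
      ext j
      by_cases hj : j = i
      · subst hj
        simp only [mem_filter, mem_univ, true_and, mem_erase, flipAt_apply_self]
        have : v j + 1 = w j := by revert h; generalize v j = x; generalize w j = y; revert x y; decide
        tauto
      · simp [flipAt_apply_ne v hj, hj]
    rw [he, card_erase_of_mem (by simp [h])]

lemma cube_adj {v w : Fin m → Fin 2} :
    (cubeGraph m).Adj v w ↔ hammingDist v w = 1 := by
  simp only [cubeGraph, SimpleGraph.fromRel_adj]
  constructor
  · rintro ⟨-, h | h⟩
    · exact h
    · rw [hammingDist_comm]; exact h
  · intro h
    refine ⟨fun hvw => by simp [hvw, hammingDist_self] at h, Or.inl h⟩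

lemma dist_one_iff {v w : Fin m → Fin 2} :
    hammingDist v w = 1 ↔ ∃ i, flipAt v i = w := by
  constructor
  · intro h
    obtain ⟨i, hi⟩ := Finset.card_eq_one.mp (by rw [← hD v w] at *; exact h)
    refine ⟨i, funext fun j => ?_⟩
    by_cases hj : j = i
    · subst hj
      have hmem : j ∈ (univ.filter fun k => v k ≠ w k) := hi ▸ Finset.mem_singleton_self j
      have : v j ≠ w j := (Finset.mem_filter.mp hmem).2
      have h2 : v j = w j + 1 := by revert this; generalize v j = x; generalize w j = y; revert x y; decide
      show Function.update v j (v j + 1) j = w j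
      rw [Function.update_self, h2]
      generalize w j = y; revert y; decide
    · have : j ∉ (univ.filter fun k => v k ≠ w k) := by rw [hi]; simp [hj]
      have hvw : v j = w j := by simpa using this
      show Function.update v i (v i + 1) j = w j
      rw [Function.update_of_ne hj, hvw]
  · rintro ⟨i, rfl⟩
    rw [hammingDist_comm, dist_flipAt, if_pos rfl, hammingDist_self]

lemma neighborFinset_eq (v : Fin m → Fin 2) :
    (cubeGraph m).neighborFinset v = univ.image (flipAt v) := by
  ext u
  simp only [SimpleGraph.mem_neighborFinset, cube_adj, mem_image, mem_univ, true_and]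
  exact dist_one_iff

lemma degree_eq (v : Fin m → Fin 2) : (cubeGraph m).degree v = m := by
  rw [SimpleGraph.degree, neighborFinset_eq,
    Finset.card_image_of_injective _ (flipAt_injective v), card_univ, Fintype.card_fin]

lemma edge_card (hm : 1 ≤ m) : (cubeGraph m).edgeFinset.card = 2 ^ (m - 1) * m := by
  have h := SimpleGraph.sum_degrees_eq_twice_card_edges (cubeGraph m)
  simp only [degree_eq, Finset.sum_const, card_univ, smul_eq_mul] at h
  have hcard : Fintype.card (Fin m → Fin 2) = 2 ^ m := by simp
  rw [hcard] at h
  have h2 : 2 ^ m = 2 * 2 ^ (m - 1) := by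
    rw [← pow_succ']; congr 1; omega
  rw [h2] at h
  generalize hg : 2 ^ (m - 1) = a at h ⊢
  rw [mul_assoc] at h
  omega

lemma jointN_card (v w : Fin m → Fin 2) (hvw : v ≠ w) :
    (univ.filter fun u => (cubeGraph m).Adj v u ∧ (cubeGraph m).Adj u w).card
      = if hammingDist v w = 2 then 2 else 0 := by
  have key : (univ.filter fun u => (cubeGraph m).Adj v u ∧ (cubeGraph m).Adj u w)
      = (univ.filter fun i => v i ≠ w i ∧ hammingDist v w = 2).image (flipAt v) := by
    ext u
    simp only [mem_filter, mem_univ, true_and, mem_image, cube_adj]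
    constructor
    · rintro ⟨h1, h2⟩
      obtain ⟨i, rfl⟩ := dist_one_iff.mp h1
      have hpos : 0 < hammingDist v w := hammingDist_pos.mpr hvw
      refine ⟨i, ⟨?_, ?_⟩, rfl⟩
      · intro hi
        rw [dist_flipAt, if_pos hi] at h2
        omega
      · by_cases hi : v i = w i
        · rw [dist_flipAt, if_pos hi] at h2; omega
        · rw [dist_flipAt, if_neg hi] at h2
          have hpos : 0 < hammingDist v w := hammingDist_pos.mpr hvw
          omega
    · rintro ⟨i, ⟨hi, hd⟩, rfl⟩
      refine ⟨dist_one_iff.mpr ⟨i, rfl⟩, ?_⟩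
      rw [dist_flipAt, if_neg hi, hd]
  rw [key, Finset.card_image_of_injective _ (flipAt_injective v)]
  by_cases hd : hammingDist v w = 2
  · rw [if_pos hd]
    have : (univ.filter fun i => v i ≠ w i ∧ hammingDist v w = 2)
        = (univ.filter fun i => v i ≠ w i) := by
      ext i; simp [hd]
    rw [this, ← hD, hd]
  · rw [if_neg hd]
    rw [Finset.card_eq_zero]
    ext i; simp [hd]

lemma sphere_card (v : Fin m → Fin 2) (k : ℕ) :
    (univ.filter fun w => hammingDist v w = k).card = m.choose k := by
  have hp : m.choose k = ((univ : Finset (Fin m)).powersetCard k).card := by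
    rw [Finset.card_powersetCard, card_univ, Fintype.card_fin]
  rw [hp]
  apply Finset.card_bij (fun w _ => univ.filter fun i => v i ≠ w i)
  · intro w hw
    simp only [mem_filter, mem_univ, true_and] at hw
    simp only [Finset.mem_powersetCard]
    exact ⟨Finset.subset_univ _, by rw [← hD, hw]⟩
  · intro a ha b hb hab
    simp only [mem_filter, mem_univ, true_and] at ha hb
    funext j
    by_cases hj : j ∈ (univ.filter fun i => v i ≠ a i)
    · have hj' : j ∈ (univ.filter fun i => v i ≠ b i) := hab ▸ hj
      simp only [mem_filter, mem_univ, true_and] at hj hj'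
      revert hj hj'
      generalize v j = x; generalize a j = y; generalize b j = z
      revert x y z; decide
    · have hj' : j ∉ (univ.filter fun i => v i ≠ b i) := hab ▸ hj
      simp only [mem_filter, mem_univ, true_and, not_not] at hj hj'
      rw [← hj, ← hj']
  · intro s hs
    simp only [Finset.mem_powersetCard] at hs
    refine ⟨fun i => if i ∈ s then v i + 1 else v i, ?_, ?_⟩
    · refine Finset.mem_filter.mpr ⟨mem_univ _, ?_⟩
      rw [hD, ← hs.2]
      congr 1
      ext i
      by_cases hi : i ∈ s
      · simp only [hi, if_true, mem_filter, mem_univ, true_and, iff_true]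
        generalize v i = x; revert x; decide
      · simp [hi]
    · ext i
      by_cases hi : i ∈ s
      · simp only [mem_filter, mem_univ, true_and, hi, if_true, iff_true]
        generalize v i = x; revert x; decide
      · simp [hi]

end Aux

section Final
open Finset Filter

lemma secN_eq {m : ℕ} (v w : Fin m → Fin 2) :
    secN (cubeGraph m) v w = if hammingDist v w = 1 then 1 else 0 := by
  simp [secN, cube_adj]

lemma conc_eq {m : ℕ} (hm : 2 ≤ m) (v w : Fin m → Fin 2) (hvw : v ≠ w) :
    conc (cubeGraph m) v w =
      if hammingDist v w = 2 then (2 : ℝ) ^ ((3 : ℤ) - (m : ℤ)) / (m : ℝ) else 0 := by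
  have hE := edge_card (m := m) (by omega)
  have hmR : (0 : ℝ) < (m : ℝ) := by positivity
  have hER : (0 : ℝ) < ((cubeGraph m).edgeFinset.card : ℝ) := by
    rw [hE]; push_cast; positivity
  have hjN : (jointN (cubeGraph m) v w : ℝ) = if hammingDist v w = 2 then 2 else 0 := by
    rw [jointN, jointN_card v w hvw]; split <;> norm_num
  by_cases hd : hammingDist v w = 2
  · rw [if_pos hd]
    have hs : secN (cubeGraph m) v w = 0 := by rw [secN_eq, if_neg (by omega)]
    rw [conc, hjN, if_pos hd, hs]
    rw [Nat.cast_zero, zero_mul, Real.sqrt_zero, sub_zero]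
    rw [max_eq_right (by positivity)]
    rw [hE]
    have h2 : ((2:ℝ)) ^ m = 2 * 2 ^ (m - 1) := by
      rw [← pow_succ']; congr 1; omega
    have h1 : ((2:ℝ)) ^ ((3:ℤ) - (m:ℤ)) = 8 / 2 ^ m := by
      rw [zpow_sub₀ (by norm_num : (2:ℝ) ≠ 0)]
      norm_num [zpow_natCast]
    rw [h1, h2]
    have hpow : (0:ℝ) < (2:ℝ) ^ (m - 1) := by positivity
    push_cast
    field_simp
    ring
  · rw [if_neg hd]
    by_cases h1 : hammingDist v w = 1
    · rw [conc, hjN, if_neg hd]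
      have hs : secN (cubeGraph m) v w = 1 := by rw [secN_eq, if_pos h1]
      rw [hs]
      rw [max_eq_left ?_]
      apply mul_nonpos_of_nonneg_of_nonpos
      · positivity
      · simp only [zero_sub, neg_nonpos]
        exact Real.sqrt_nonneg _
    · rw [conc, hjN, if_neg hd]
      have hs : secN (cubeGraph m) v w = 0 := by rw [secN_eq, if_neg h1]
      rw [hs]
      simp

lemma gamma_eq {m : ℕ} (hm : 2 ≤ m) (v : Fin m → Fin 2) :
    gammaV (cubeGraph m) v = 4 * ((m : ℝ) - 1) / (((2 : ℝ) ^ m - 2) * (m : ℝ)) := by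
  have hE := edge_card (m := m) (by omega)
  set c : ℝ := (2 : ℝ) ^ ((3 : ℤ) - (m : ℤ)) / (m : ℝ) with hc
  have hsum : (∑ w ∈ univ.erase v, (conc (cubeGraph m) v w) ^ 2)
      = (m.choose 2 : ℝ) * c ^ 2 := by
    have hcong : ∀ w ∈ univ.erase v, (conc (cubeGraph m) v w) ^ 2
        = if hammingDist v w = 2 then c ^ 2 else 0 := by
      intro w hw
      have hvw : v ≠ w := fun h => (Finset.mem_erase.mp hw).1 h.symm
      rw [conc_eq hm v w hvw]
      split <;> simp [hc]
    rw [Finset.sum_congr rfl hcong, Finset.sum_ite, Finset.sum_const, Finset.sum_const_zero,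
      add_zero, nsmul_eq_mul]
    have hfe : (univ.erase v).filter (fun w => hammingDist v w = 2)
        = univ.filter (fun w => hammingDist v w = 2) := by
      ext w
      simp only [Finset.mem_filter, Finset.mem_erase, Finset.mem_univ, true_and, and_true]
      constructor
      · tauto
      · intro h
        refine ⟨fun hw => ?_, h⟩
        rw [hw, hammingDist_self] at h; omega
    rw [hfe, sphere_card]
  rw [gammaV, hsum, degree_eq, hE]
  have hch : ((m.choose 2 : ℕ) : ℝ) = (m : ℝ) * ((m : ℝ) - 1) / 2 := by
    rw [Nat.cast_choose_two]
  have h2 : ((2:ℝ)) ^ m = 2 * 2 ^ (m - 1) := by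
    rw [← pow_succ']; congr 1; omega
  have h1 : c = 8 / ((2:ℝ) ^ m * m) := by
    rw [hc, zpow_sub₀ (by norm_num : (2:ℝ) ≠ 0)]
    rw [div_div]
    norm_num [zpow_natCast]
  have hmR : (0 : ℝ) < (m : ℝ) := by
    have : 0 < m := by omega
    exact_mod_cast this
  have hpow : (0:ℝ) < (2:ℝ) ^ (m - 1) := by positivity
  have hpm1 : (1:ℝ) < (2:ℝ) ^ (m - 1) :=
    one_lt_pow₀ (by norm_num) (by omega)
  rw [hch, h1, h2]
  push_cast
  generalize hg : (2:ℝ) ^ (m - 1) = a at hpm1 ⊢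
  have hne1 : (2:ℝ) * a - 2 ≠ 0 := by nlinarith
  have hne2 : a - 1 ≠ 0 := by nlinarith
  have ha : a ≠ 0 := by nlinarith
  have hm' : (m:ℝ) ≠ 0 := ne_of_gt hmR
  have hf1 : a * (m:ℝ) - (m:ℝ) = (a - 1) * (m:ℝ) := by ring
  have hf2 : 2 * a - 2 = 2 * (a - 1) := by ring
  rw [hf1, hf2]
  field_simp
  ring

theorem limit_zero :
    Tendsto (fun m : ℕ => 4 * ((m : ℝ) - 1) / (((2 : ℝ) ^ m - 2) * (m : ℝ)))
      atTop (nhds 0) := by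
  have heq : ∀ᶠ m : ℕ in atTop,
      (fun m : ℕ => (4 - 4 / (m:ℝ)) / ((2:ℝ) ^ m - 2)) m
        = 4 * ((m : ℝ) - 1) / (((2 : ℝ) ^ m - 2) * (m : ℝ)) := by
    filter_upwards [eventually_ge_atTop 1] with m hm
    have hmR : (0:ℝ) < (m:ℝ) := by exact_mod_cast Nat.pos_of_ne_zero (by omega)
    rw [mul_comm ((2:ℝ)^m - 2) (m:ℝ), ← div_div]
    congr 1
    field_simp
  apply Tendsto.congr' heq
  refine Tendsto.div_atTop (a := 4 - 0) ?_ ?_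
  · exact Tendsto.sub tendsto_const_nhds
      (Tendsto.div_atTop tendsto_const_nhds tendsto_natCast_atTop_atTop)
  · have h1 : Tendsto (fun m : ℕ => (2:ℝ) ^ m) atTop atTop :=
      tendsto_pow_atTop_atTop_of_one_lt (by norm_num)
    exact tendsto_atTop_add_const_right atTop (-2) h1 |>.congr (fun m => by ring)

/-- For the hypercube graph `Q_m` (`m ≥ 2`), the excitation-state
`|B²_{2^m}⟩` has two-party concurrence `2^{3−m}/m` between vertices at Hamming
distance `2` and zero otherwise, and entanglement ratio
`Γ_v = 4(m−1)/((2^m−2)m)`, which tends to `0` as `m → ∞`. -/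
theorem stmt18 (m : ℕ) (hm : 2 ≤ m) :
    (∀ v w : Fin m → Fin 2, v ≠ w →
      conc (cubeGraph m) v w =
        if hammingDist v w = 2 then (2 : ℝ) ^ ((3 : ℤ) - (m : ℤ)) / (m : ℝ) else 0) ∧
    (∀ v : Fin m → Fin 2,
      gammaV (cubeGraph m) v = 4 * ((m : ℝ) - 1) / (((2 : ℝ) ^ m - 2) * (m : ℝ))) ∧
    Tendsto (fun m : ℕ => 4 * ((m : ℝ) - 1) / (((2 : ℝ) ^ m - 2) * (m : ℝ)))
      atTop (nhds 0) := by
  exact ⟨fun v w hvw => conc_eq hm v w hvw, fun v => gamma_eq hm v, limit_zero⟩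

end Final
end
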